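/- Let R be a finite commutative chain ring, λ a unit of R, n a positive integer, and let I be an ideal of R[x] = R[X]/⟨X^n − λ⟩ which is the internal direct sum I = h_1·R[x] ⊕ ⋯ ⊕ h_r·R[x] of the ideals generated by elements h_1, …, h_r. Then the set I^* = { f^* : f ∈ I } is an ideal of R[X]/⟨X^n − λ^{-1}⟩ and is the internal direct sum I^* = h_1^*·R[x'] ⊕ ⋯ ⊕ h_r^*·R[x'] of the ideals generated by the reciprocals h_i^*. -/

import Mathlib

open Polynomial

section Defs

variable {R : Type*}

/-- An idempotent `e` of a commutative ring is *primitive* if it is nonzero and cannot be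
written as a sum of two nonzero orthogonal idempotents. -/
def IsPrimitiveIdem [CommRing R] (e : R) : Prop :=
  IsIdempotentElem e ∧ e ≠ 0 ∧
    ∀ u v : R, IsIdempotentElem u → IsIdempotentElem v → u * v = 0 → e = u + v →
      u = 0 ∨ v = 0

/-- A family of idempotents forming a complete set of pairwise orthogonal idempotents. -/
def IsCompleteOrthoIdem [CommRing R] {r : ℕ} (e : Fin r → R) : Prop :=
  (∀ i, IsIdempotentElem (e i)) ∧ (∑ i, e i) = 1 ∧
    ∀ i j, i ≠ j → e i * e j = 0

/-- A complete set of pairwise orthogonal primitive idempotents. -/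
def IsCompletePrimIdem [CommRing R] {r : ℕ} (e : Fin r → R) : Prop :=
  IsCompleteOrthoIdem e ∧ ∀ i, IsPrimitiveIdem (e i)

/-- The `lam`-constacyclic shift `(a_0, …, a_(n-1)) ↦ (lam·a_(n-1), a_0, …, a_(n-2))`. -/
def ctShift [CommRing R] {n : ℕ} [NeZero n] (lam : R) (a : Fin n → R) : Fin n → R :=
  fun i => if i = 0 then lam * a (i - 1) else a (i - 1)

/-- The dual code of a linear code of length `n` over `R`. -/
def dualCode [CommRing R] {n : ℕ} (Ccode : Submodule R (Fin n → R)) :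
    Submodule R (Fin n → R) where
  carrier := {a | ∀ b ∈ Ccode, ∑ i, a i * b i = 0}
  add_mem' := by
    intro a a' ha ha' b hb
    simpa [add_mul, Finset.sum_add_distrib] using by rw [ha b hb, ha' b hb, add_zero]
  zero_mem' := by intro b hb; simp
  smul_mem' := by
    intro c a ha b hb
    simpa [Finset.mul_sum, mul_assoc] using by rw [← Finset.mul_sum, ha b hb, mul_zero]

/-- The linear map `(a_0, …, a_(n-1)) ↦ a_0 + a_1 x + ⋯ + a_(n-1) x^(n-1)` from `R^n` to
`R[X]/⟨g⟩`. -/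
noncomputable def polyLin [CommRing R] (n : ℕ) (g : R[X]) :
    (Fin n → R) →ₗ[R] (R[X] ⧸ Ideal.span {g}) where
  toFun a := Ideal.Quotient.mk _ (∑ i, C (a i) * X ^ (i : ℕ))
  map_add' a b := by
    simp only [Pi.add_apply, map_add, add_mul, Finset.sum_add_distrib]
  map_smul' c a := by
    simp only [Pi.smul_apply, smul_eq_mul, RingHom.id_apply]
    have h : (∑ i : Fin n, C (c * a i) * X ^ (i : ℕ))
        = c • ∑ i : Fin n, C (a i) * X ^ (i : ℕ) := by
      rw [Finset.smul_sum]
      exact Finset.sum_congr rfl fun i _ => by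
        rw [Polynomial.smul_eq_C_mul, ← mul_assoc, ← C_mul]
    rw [h]
    exact (Submodule.Quotient.mk_smul (Ideal.span {g}) c
      (∑ i : Fin n, C (a i) * X ^ (i : ℕ))).symm

/-- The linear code of length `n` corresponding to an ideal of `R[X]/⟨g⟩` under the usual
identification. -/
noncomputable def idealCode [CommRing R] (n : ℕ) (g : R[X])
    (I : Ideal (R[X] ⧸ Ideal.span {g})) : Submodule R (Fin n → R) :=
  (Submodule.restrictScalars R (I : Submodule (R[X] ⧸ Ideal.span {g}) (R[X] ⧸ Ideal.span {g}))).comap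
    (polyLin n g)

/-- The reciprocal `f* = a_0 x^(n-1) + a_1 x^(n-2) + ⋯ + a_(n-1)` of an element
`f = a_0 + a_1 x + ⋯ + a_(n-1) x^(n-1)` of `R[X]/⟨g⟩`, viewed in `R[X]/⟨h⟩`; the canonical
representative of degree `< n` is obtained by reduction `%ₘ g` of any representative. -/
noncomputable def recip [CommRing R] (n : ℕ) (g h : R[X]) (f : R[X] ⧸ Ideal.span {g}) :
    R[X] ⧸ Ideal.span {h} :=
  Ideal.Quotient.mk _ (((Ideal.Quotient.mk_surjective f).choose %ₘ g).reflect (n - 1))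

/-- The code `c·R^n = {(c·b_0, …, c·b_(n-1)) : b ∈ R^n}`. -/
def scalarCode [CommRing R] (n : ℕ) (c : R) : Submodule R (Fin n → R) where
  carrier := {a | ∀ i, ∃ b, a i = c * b}
  add_mem' := by
    intro a a' ha ha' i
    obtain ⟨b, hb⟩ := ha i; obtain ⟨b', hb'⟩ := ha' i
    exact ⟨b + b', by simp [hb, hb', mul_add]⟩
  zero_mem' := fun i => ⟨0, by simp⟩
  smul_mem' := by
    intro r a ha i
    obtain ⟨b, hb⟩ := ha i
    exact ⟨r * b, by simp [hb]; ring⟩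

end Defs



section RecipAux

variable {R : Type*} [CommRing R]

lemma mkC_eq (n : ℕ) (v c : R) :
    Ideal.Quotient.mk (Ideal.span {X ^ n - C v}) (C c)
      = algebraMap R (Polynomial R ⧸ Ideal.span {X ^ n - C v}) c := rfl

lemma mkXn_eq (n : ℕ) (v : R) :
    (Ideal.Quotient.mk (Ideal.span {X ^ n - C v}) X) ^ n
      = Ideal.Quotient.mk _ (C v) := by
  have h0 : Ideal.Quotient.mk (Ideal.span {X ^ n - C v}) (X ^ n - C v) = 0 :=
    Ideal.Quotient.eq_zero_iff_mem.mpr (Ideal.subset_span rfl)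
  rw [map_sub, map_pow, sub_eq_zero] at h0
  exact h0

noncomputable def sigHom (n : ℕ) (u v : R) (huv : u * v = 1) (hn : 0 < n) :
    (Polynomial R ⧸ Ideal.span {X ^ n - C u}) →ₐ[R]
      (Polynomial R ⧸ Ideal.span {X ^ n - C v}) := by
  refine Ideal.Quotient.liftₐ _
    (aeval (Ideal.Quotient.mk (Ideal.span {X ^ n - C v}) (C u * X ^ (n - 1)))) ?_
  intro a ha
  rw [Ideal.mem_span_singleton'] at ha
  obtain ⟨q, rfl⟩ := ha
  rw [map_mul]
  suffices h : aeval (Ideal.Quotient.mk (Ideal.span {X ^ n - C v}) (C u * X ^ (n - 1)))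
      (X ^ n - C u) = 0 by rw [h, mul_zero]
  rw [map_sub, aeval_X_pow, aeval_C]
  simp only [map_mul, map_pow]
  rw [mul_pow, ← pow_mul, Nat.mul_comm (n - 1) n, pow_mul, mkXn_eq]
  have hc : u ^ n * v ^ (n - 1) = u := by
    obtain ⟨m, rfl⟩ := Nat.exists_eq_add_of_lt hn
    simp only [Nat.zero_add, Nat.add_sub_cancel]
    rw [pow_succ', mul_assoc, ← mul_pow, huv, one_pow, mul_one]
  have hC : (C u : Polynomial R) ^ n * (C v) ^ (n - 1) = C u := by
    rw [← C_pow, ← C_pow, ← C_mul, hc]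
  have hfin : (Ideal.Quotient.mk (Ideal.span {X ^ n - C v}) (C u)) ^ n *
      (Ideal.Quotient.mk (Ideal.span {X ^ n - C v}) (C v)) ^ (n - 1)
      = Ideal.Quotient.mk (Ideal.span {X ^ n - C v}) (C u) := by
    calc (Ideal.Quotient.mk (Ideal.span {X ^ n - C v}) (C u)) ^ n *
        (Ideal.Quotient.mk (Ideal.span {X ^ n - C v}) (C v)) ^ (n - 1)
        = Ideal.Quotient.mk (Ideal.span {X ^ n - C v}) ((C u) ^ n * (C v) ^ (n - 1)) := by
          rw [map_mul, map_pow, map_pow]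
      _ = Ideal.Quotient.mk (Ideal.span {X ^ n - C v}) (C u) := by rw [hC]
  rw [hfin, mkC_eq, sub_self]

lemma sigHom_mk (n : ℕ) (u v : R) (huv : u * v = 1) (hn : 0 < n) (p : Polynomial R) :
    sigHom n u v huv hn (Ideal.Quotient.mk _ p)
      = aeval (Ideal.Quotient.mk (Ideal.span {X ^ n - C v}) (C u * X ^ (n - 1))) p := by
  simp [sigHom, Ideal.Quotient.liftₐ_apply, Ideal.Quotient.lift_mk]
  rfl

lemma pow_key (n : ℕ) (u v : R) (huv : u * v = 1) {i : ℕ} (hi : i < n) :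
    (Ideal.Quotient.mk (Ideal.span {X ^ n - C v}) X) ^ (n - 1) *
      (Ideal.Quotient.mk (Ideal.span {X ^ n - C v}) (C u) *
        (Ideal.Quotient.mk (Ideal.span {X ^ n - C v}) X) ^ (n - 1)) ^ i
      = (Ideal.Quotient.mk (Ideal.span {X ^ n - C v}) X) ^ (n - 1 - i) := by
  set mk := Ideal.Quotient.mk (Ideal.span {X ^ n - C v})
  have h1 : (n - 1) + (n - 1) * i = (n - 1 - i) + n * i := by
    obtain ⟨m, rfl⟩ := Nat.exists_eq_add_of_lt hi
    have e2 : i + m + 1 - 1 - i = m := by omega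
    simp only [Nat.add_sub_cancel] at e2 ⊢
    rw [e2]
    ring
  have hone : mk (C u) * mk (C v) = 1 := by
    rw [← map_mul, ← C_mul, huv, C_1, map_one]
  calc mk X ^ (n - 1) * (mk (C u) * mk X ^ (n - 1)) ^ i
      = mk (C u) ^ i * (mk X ^ ((n - 1) + (n - 1) * i)) := by
        rw [mul_pow, ← pow_mul, pow_add, pow_mul]
        ring
    _ = mk (C u) ^ i * (mk X ^ (n - 1 - i) * (mk X ^ n) ^ i) := by rw [h1, pow_add, pow_mul]
    _ = mk X ^ (n - 1 - i) * (mk (C u) * mk (C v)) ^ i := by rw [mkXn_eq]; ring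
    _ = mk X ^ (n - 1 - i) := by rw [hone, one_pow, mul_one]

lemma mk_reflect (n : ℕ) (u v : R) (huv : u * v = 1) (hn : 0 < n) (p : Polynomial R)
    (hp : p.natDegree < n) :
    Ideal.Quotient.mk (Ideal.span {X ^ n - C v}) (p.reflect (n - 1))
      = (Ideal.Quotient.mk (Ideal.span {X ^ n - C v}) X) ^ (n - 1) *
          sigHom n u v huv hn (Ideal.Quotient.mk _ p) := by
  have hsum : ∀ (s : Finset ℕ) (f : ℕ → Polynomial R),
      reflect (n - 1) (∑ i ∈ s, f i) = ∑ i ∈ s, reflect (n - 1) (f i) := fun s f =>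
    map_sum (AddMonoidHom.mk' (reflect (n - 1)) (fun a b => reflect_add a b (n - 1))) f s
  rw [sigHom_mk]
  conv_lhs => rw [p.as_sum_range' n hp]
  conv_rhs => rw [p.as_sum_range' n hp]
  rw [hsum, map_sum, map_sum, Finset.mul_sum]
  refine Finset.sum_congr rfl fun i hi => ?_
  have hilt : i < n := Finset.mem_range.mp hi
  rw [← C_mul_X_pow_eq_monomial, reflect_C_mul_X_pow, revAt_le (by omega : i ≤ n - 1)]
  simp only [map_mul, map_pow, aeval_C, aeval_X]
  rw [mul_left_comm, pow_key n u v huv hilt, mkC_eq]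

lemma isUnit_mkX_pow (n : ℕ) (u v : R) (huv : u * v = 1) (hn : 0 < n) (k : ℕ) :
    IsUnit ((Ideal.Quotient.mk (Ideal.span {X ^ n - C v}) X) ^ k) := by
  refine (IsUnit.of_mul_eq_one (a := Ideal.Quotient.mk (Ideal.span {X ^ n - C v}) X)
    (Ideal.Quotient.mk _ (C u * X ^ (n - 1))) ?_).pow k
  rw [map_mul, map_pow, mul_left_comm, ← pow_succ']
  have e1 : n - 1 + 1 = n := by omega
  rw [e1, mkXn_eq, ← map_mul, ← C_mul, huv, C_1, map_one]

lemma sig_comp_sig (n : ℕ) (u v : R) (huv : u * v = 1) (hvu : v * u = 1) (hn : 0 < n) :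
    (sigHom n v u hvu hn).comp (sigHom n u v huv hn) = AlgHom.id R _ := by
  apply Ideal.Quotient.algHom_ext
  apply Polynomial.algHom_ext
  set mk := Ideal.Quotient.mk (Ideal.span {X ^ n - C u}) with hmk
  simp only [AlgHom.coe_comp, Function.comp_apply, Ideal.Quotient.mkₐ_eq_mk, AlgHom.coe_id,
    id_eq]
  rw [← hmk, sigHom_mk, aeval_X, sigHom_mk, map_mul, aeval_C, map_pow, aeval_X]
  apply (isUnit_mkX_pow n v u hvu hn (n - 1)).mul_right_cancel
  have h2 : (mk X) * mk X ^ (n - 1) = mk (C u) := by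
    rw [← pow_succ']
    have e1 : n - 1 + 1 = n := by omega
    rw [e1, mkXn_eq]
  have key : (mk (C v * X ^ (n - 1))) ^ (n - 1) * mk X ^ (n - 1)
      = mk (C v) ^ (n - 1) * mk (C u) ^ (n - 1) := by
    have e2 : (n - 1) * (n - 1) + (n - 1) = n * (n - 1) := by
      have e1 : n - 1 + 1 = n := by omega
      calc (n - 1) * (n - 1) + (n - 1) = ((n - 1) + 1) * (n - 1) := by ring
        _ = n * (n - 1) := by rw [e1]
    simp only [map_mul, map_pow]
    rw [mul_pow, mul_assoc, ← pow_mul, ← pow_add, e2, pow_mul, mkXn_eq]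
  have hCv : (mk (C v)) ^ (n - 1) * (mk (C u)) ^ (n - 1) = 1 := by
    rw [← mul_pow, ← map_mul, ← C_mul, hvu, C_1, map_one, one_pow]
  rw [mul_assoc, key, hCv, mul_one, h2]
  exact (mkC_eq n u u).symm

lemma recip_eq [Nontrivial R] (n : ℕ) (u v : R) (huv : u * v = 1) (hn : 0 < n)
    (f : Polynomial R ⧸ Ideal.span {X ^ n - C u}) :
    recip n (X ^ n - C u) (X ^ n - C v) f
      = (Ideal.Quotient.mk (Ideal.span {X ^ n - C v}) X) ^ (n - 1)
          * sigHom n u v huv hn f := by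
  have hg : (X ^ n - C u).Monic := monic_X_pow_sub_C u hn.ne'
  have hg1 : (X ^ n - C u) ≠ 1 := by
    intro h1
    have hd := natDegree_X_pow_sub_C (n := n) (r := u)
    rw [h1, natDegree_one] at hd
    omega
  set q := (Ideal.Quotient.mk_surjective f).choose with hq
  have hqs : Ideal.Quotient.mk (Ideal.span {X ^ n - C u}) q = f :=
    (Ideal.Quotient.mk_surjective f).choose_spec
  have hdeg : (q %ₘ (X ^ n - C u)).natDegree < n := by
    have := natDegree_modByMonic_lt q hg hg1
    rwa [natDegree_X_pow_sub_C] at this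
  have hmkq : Ideal.Quotient.mk (Ideal.span {X ^ n - C u}) (q %ₘ (X ^ n - C u)) = f := by
    have hmem : (X ^ n - C u) * (q /ₘ (X ^ n - C u)) ∈ Ideal.span {X ^ n - C u} :=
      Ideal.mul_mem_right _ _ (Ideal.subset_span rfl)
    have hz : Ideal.Quotient.mk (Ideal.span {X ^ n - C u})
        ((X ^ n - C u) * (q /ₘ (X ^ n - C u))) = 0 :=
      Ideal.Quotient.eq_zero_iff_mem.mpr hmem
    rw [modByMonic_eq_sub_mul_div q (X ^ n - C u), map_sub, hz, sub_zero, hqs]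
  unfold recip
  rw [← hq, mk_reflect n u v huv hn _ hdeg, hmkq]

end RecipAux

/-- If an ideal `I` of `R[X]/⟨Xⁿ - λ⟩` is the internal direct sum of the ideals `hᵢ·R[x]`,
then `I* = {f* : f ∈ I}` is the ideal of `R[X]/⟨Xⁿ - λ⁻¹⟩` given by the internal direct sum
of the ideals `hᵢ*·R[x']`. -/
theorem recip_of_direct_sum_ideal {R : Type*} [CommRing R] [Finite R] [IsLocalRing R]
    (hprinc : (IsLocalRing.maximalIdeal R).IsPrincipal)
    (u : Rˣ) (n : ℕ) (hn : 0 < n)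
    {r : ℕ} (h : Fin r → (Polynomial R ⧸ Ideal.span {X ^ n - C (u : R)}))
    (I : Ideal (Polynomial R ⧸ Ideal.span {X ^ n - C (u : R)}))
    (hind : iSupIndep fun i => Ideal.span {h i})
    (hI : I = ⨆ i, Ideal.span {h i}) :
    (recip n (X ^ n - C (u : R)) (X ^ n - C ((u⁻¹ : Rˣ) : R))) '' (I : Set _)
      = ((⨆ i, Ideal.span
            {recip n (X ^ n - C (u : R)) (X ^ n - C ((u⁻¹ : Rˣ) : R)) (h i)} :
          Ideal (Polynomial R ⧸ Ideal.span {X ^ n - C ((u⁻¹ : Rˣ) : R)})) : Set _) ∧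
    iSupIndep fun i => Ideal.span
      {recip n (X ^ n - C (u : R)) (X ^ n - C ((u⁻¹ : Rˣ) : R)) (h i)} := by
  have huv : (u : R) * ((u⁻¹ : Rˣ) : R) = 1 := by
    rw [Units.mul_inv]
  have hvu : ((u⁻¹ : Rˣ) : R) * (u : R) = 1 := by
    rw [Units.inv_mul]
  set v : R := ((u⁻¹ : Rˣ) : R) with hv
  set σ := sigHom n (u : R) v huv hn with hσ
  set τ := sigHom n v (u : R) hvu hn with hτ
  have hcomp1 : τ.comp σ = AlgHom.id R _ := sig_comp_sig n (u : R) v huv hvu hn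
  have hcomp2 : σ.comp τ = AlgHom.id R _ := sig_comp_sig n v (u : R) hvu huv hn
  have hbij : Function.Bijective σ :=
    Function.bijective_iff_has_inverse.mpr
      ⟨τ, fun x => AlgHom.congr_fun hcomp1 x, fun x => AlgHom.congr_fun hcomp2 x⟩
  have hd : IsUnit ((Ideal.Quotient.mk (Ideal.span {X ^ n - C v}) X) ^ (n - 1)) :=
    isUnit_mkX_pow n (u : R) v huv hn (n - 1)
  have hrec : ∀ f, recip n (X ^ n - C (u : R)) (X ^ n - C v) f
      = (Ideal.Quotient.mk (Ideal.span {X ^ n - C v}) X) ^ (n - 1) * σ f :=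
    fun f => recip_eq n (u : R) v huv hn f
  have himg : recip n (X ^ n - C (u : R)) (X ^ n - C v) '' (I : Set _)
      = (Ideal.map σ I : Set _) := by
    ext a
    constructor
    · rintro ⟨f, hf, rfl⟩
      rw [hrec f]
      exact Ideal.mul_mem_left _ _ (Ideal.mem_map_of_mem σ hf)
    · intro ha
      obtain ⟨f, hfI, rfl⟩ := (Ideal.mem_map_iff_of_surjective σ hbij.2).mp ha
      obtain ⟨e, he⟩ := hd
      refine ⟨τ (↑e⁻¹) * f, I.mul_mem_left _ hfI, ?_⟩
      have hτσ : σ (τ (↑e⁻¹)) = (↑e⁻¹ :) := AlgHom.congr_fun hcomp2 _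
      rw [hrec, map_mul, hτσ, ← he, ← mul_assoc, Units.mul_inv, one_mul]
  have hspan : ∀ i, Ideal.span {recip n (X ^ n - C (u : R)) (X ^ n - C v) (h i)}
      = Ideal.map σ (Ideal.span {h i}) := by
    intro i
    rw [Ideal.map_span, Set.image_singleton, hrec (h i),
      Ideal.span_singleton_mul_left_unit hd]
  have hmap : Ideal.map σ I
      = ⨆ i, Ideal.span {recip n (X ^ n - C (u : R)) (X ^ n - C v) (h i)} := by
    rw [hI, Ideal.map_iSup]
    exact iSup_congr fun i => (hspan i).symm
  refine ⟨by rw [himg, hmap], ?_⟩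
  have horder : ∀ J : Ideal (Polynomial R ⧸ Ideal.span {X ^ n - C (u : R)}),
      (Ideal.relIsoOfBijective σ hbij).symm J = Ideal.map σ J := fun J => rfl
  have hfun : (fun i => Ideal.span
        {recip n (X ^ n - C (u : R)) (X ^ n - C v) (h i)})
      = fun i => (Ideal.relIsoOfBijective σ hbij).symm (Ideal.span {h i}) := by
    funext i
    rw [horder, hspan i]
  rw [hfun]
  exact hind.map_orderIso (Ideal.relIsoOfBijective σ hbij).symm
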